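/- Let R be a commutative von Neumann regular ring with no nonzero nilpotent elements realized as R = ∏^s_{x∈X} R/xR over its maximal ideal space. If q is a polynomial over R and for every maximal ideal M the image of q in (R/M)[y] has a root, and R has the patchwork property over a compact Boolean space of maximal ideals where solution sets of equations are clopen, then q has a root in R. -/

import Mathlib

theorem stmt_14 (R : Type*) [CommRing R]
    (hvnr : ∀ x : R, ∃ y : R, x * y * x = x)
    (hred : ∀ r : R, (∃ n : ℕ, r ^ n = 0) → r = 0)
    (hcpt : CompactSpace (MaximalSpectrum R))
    (q : Polynomial R)
    -- solution sets of (polynomial) equations are clopen: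
    (hclopen : ∀ r : R, IsClopen {M : MaximalSpectrum R | r ∈ M.asIdeal})
    -- patchwork property:
    (hpatch : ∀ f g : R, ∀ U : Set (MaximalSpectrum R), IsClopen U →
      ∃ h : R, (∀ M ∈ U, h - f ∈ M.asIdeal) ∧ (∀ M ∉ U, h - g ∈ M.asIdeal))
    -- in every quotient field R/M the image of q has a root:
    (hroot : ∀ M : MaximalSpectrum R,
      ∃ r : R ⧸ M.asIdeal, (q.map (Ideal.Quotient.mk M.asIdeal)).eval r = 0) :
    ∃ r : R, q.eval r = 0 := by
  classical
  -- congruence lemma: h ≡ f mod N implies q.eval h ≡ q.eval f mod N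
  have hcong : ∀ (f h : R) (N : MaximalSpectrum R), h - f ∈ N.asIdeal →
      Polynomial.eval f q ∈ N.asIdeal → Polynomial.eval h q ∈ N.asIdeal := by
    intro f h N hhf hf
    have hdvd : (h - f) ∣ (q.eval h - q.eval f) := Polynomial.sub_dvd_eval_sub h f q
    obtain ⟨c, hc⟩ := hdvd
    have : q.eval h - q.eval f ∈ N.asIdeal := hc ▸ Ideal.mul_mem_right _ _ hhf
    have := N.asIdeal.add_mem this hf
    simpa using this
  -- for each maximal ideal pick a lift of a root
  have hwit : ∀ M : MaximalSpectrum R, ∃ r : R, q.eval r ∈ M.asIdeal := by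
    intro M
    obtain ⟨rb, hrb⟩ := hroot M
    obtain ⟨r, hr⟩ := Ideal.Quotient.mk_surjective rb
    refine ⟨r, ?_⟩
    have : Ideal.Quotient.mk M.asIdeal (q.eval r) = 0 := by
      rw [← Polynomial.eval₂_hom, ← Polynomial.eval_map, hr, hrb]
    exact (Ideal.Quotient.eq_zero_iff_mem).mp this
  choose r hr using hwit
  -- clopen cover
  set U : MaximalSpectrum R → Set (MaximalSpectrum R) :=
    fun M => {N : MaximalSpectrum R | q.eval (r M) ∈ N.asIdeal} with hU
  have hUclopen : ∀ M, IsClopen (U M) := fun M => hclopen _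
  have hcover : (Set.univ : Set (MaximalSpectrum R)) ⊆ ⋃ M, U M := by
    intro N _
    exact Set.mem_iUnion.mpr ⟨N, hr N⟩
  obtain ⟨t, ht⟩ := isCompact_univ.elim_finite_subcover U (fun M => (hUclopen M).2) hcover
  -- patch over the finite set t
  have key : ∀ s : Finset (MaximalSpectrum R), ∃ h : R,
      ∀ N ∈ ⋃ M ∈ s, U M, Polynomial.eval h q ∈ N.asIdeal := by
    intro s
    induction s using Finset.induction with
    | empty => exact ⟨0, by simp⟩
    | @insert M s hM ih =>
      obtain ⟨h, hh⟩ := ih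
      obtain ⟨h', hh'1, hh'2⟩ := hpatch (r M) h (U M) (hUclopen M)
      refine ⟨h', ?_⟩
      intro N hN
      by_cases hNU : N ∈ U M
      · exact hcong (r M) h' N (hh'1 N hNU) hNU
      · have : N ∈ ⋃ M' ∈ s, U M' := by
          simp only [Finset.mem_insert, Set.mem_iUnion] at hN ⊢
          obtain ⟨M', hM', hNM'⟩ := hN
          rcases hM' with rfl | hM'
          · exact absurd hNM' hNU
          · exact ⟨M', hM', hNM'⟩
        exact hcong h h' N (hh'2 N hNU) (hh N this)
  obtain ⟨h, hh⟩ := key t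
  -- q.eval h is in every maximal ideal
  have hall : ∀ N : MaximalSpectrum R, q.eval h ∈ N.asIdeal := fun N =>
    hh N (ht (Set.mem_univ N))
  -- hence it is zero by von Neumann regularity
  refine ⟨h, ?_⟩
  set a := q.eval h with ha
  obtain ⟨y, hy⟩ := hvnr a
  have hunit : IsUnit (1 - y * a) := by
    by_contra hnu
    obtain ⟨I, hImax, hI⟩ := exists_max_ideal_of_mem_nonunits
      (mem_nonunits_iff.mpr hnu)
    have haI : a ∈ I := hall ⟨I, hImax⟩
    have : (1 : R) ∈ I := by
      have := I.add_mem hI (I.mul_mem_left y haI)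
      simpa using this
    exact hImax.ne_top ((Ideal.eq_top_iff_one _).mpr this)
  have : a * (1 - y * a) = 0 := by linear_combination -hy
  obtain ⟨u, hu⟩ := hunit
  calc a = a * (1 - y * a) * ↑u⁻¹ := by rw [← hu, mul_assoc, Units.mul_inv, mul_one]
    _ = 0 := by rw [this]; ring
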